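/- For the hyperbolic-plane interaction potential K(θ) = -(1/(2π)) log tanh(θ/2) + 2 log cosh(θ/2), the radial force -K'(θ) = (1/(2π)) (1/sinh θ) - tanh(θ/2) vanishes exactly at θ* = arccosh(1 + 1/(2π)), is positive (repulsive) for 0 < θ < θ*, and negative (attractive) for θ > θ*. -/

import Mathlib

open Real

/-- Inverse hyperbolic cosine on `[1, ∞)`: `arcosh x = log (x + √(x² - 1))`. -/
noncomputable def Real.arcosh' (x : ℝ) : ℝ := Real.log (x + Real.sqrt (x ^ 2 - 1))

lemma cosh_arcosh_aux {c : ℝ} (hc : 1 ≤ c) : Real.cosh (Real.arcosh' c) = c := by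
  set s := Real.sqrt (c ^ 2 - 1) with hs
  have hs0 : 0 ≤ s := Real.sqrt_nonneg _
  have hs2 : s ^ 2 = c ^ 2 - 1 := Real.sq_sqrt (by nlinarith)
  have hy : (0 : ℝ) < c + s := by nlinarith
  rw [Real.arcosh', Real.cosh_eq, Real.exp_log hy, ← Real.log_inv, Real.exp_log (by positivity)]
  field_simp
  nlinarith

lemma force_alg1 (s ch p : ℝ) (hs : 0 < s) (hch : 0 < ch) (hp : 0 < p)
    (hpyth : ch ^ 2 - s ^ 2 = 1) :
    -(-(1 / (2 * p)) * (((ch * (1/2) * ch - s * (s * (1/2))) / ch ^ 2) / (s / ch))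
      + 2 * ((s * (1/2)) / ch))
    = (1 / (2 * p)) * (1 / (2 * s * ch)) - s / ch := by
  have h : ch * (1/2) * ch - s * (s * (1/2)) = 1 / 2 := by linear_combination hpyth / 2
  rw [h]
  field_simp
  ring

lemma force_alg2 (s ch p : ℝ) (hs : 0 < s) (hch : 0 < ch) (hp : 0 < p)
    (hpyth : ch ^ 2 - s ^ 2 = 1) :
    (1 / (2 * p)) * (1 / (2 * s * ch)) - s / ch
    = ((1 + 1 / (2 * p)) - (ch ^ 2 + s ^ 2)) / (2 * s * ch) := by
  rw [eq_div_iff (by positivity : (2*s*ch : ℝ) ≠ 0)]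
  field_simp
  linear_combination (2 * p) * hpyth

lemma arcosh_pos_aux {c : ℝ} (hc : 1 < c) : 0 < Real.arcosh' c := by
  apply Real.log_pos
  have := Real.sqrt_nonneg (c ^ 2 - 1)
  linarith

theorem hyperbolic_potential_force (K : ℝ → ℝ)
    (hK : K = fun θ => -(1 / (2 * π)) * Real.log (Real.tanh (θ / 2))
      + 2 * Real.log (Real.cosh (θ / 2))) :
    (∀ θ > (0 : ℝ), -deriv K θ = (1 / (2 * π)) * (1 / Real.sinh θ) - Real.tanh (θ / 2)) ∧
    (∀ θ > (0 : ℝ), -deriv K θ = 0 ↔ θ = Real.arcosh' (1 + 1 / (2 * π))) ∧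
    (∀ θ, 0 < θ → θ < Real.arcosh' (1 + 1 / (2 * π)) → 0 < -deriv K θ) ∧
    (∀ θ, Real.arcosh' (1 + 1 / (2 * π)) < θ → -deriv K θ < 0) := by
  have hpi : (0 : ℝ) < π := Real.pi_pos
  set c : ℝ := 1 + 1 / (2 * π) with hc
  have hc1 : 1 < c := by
    rw [hc]
    have : 0 < 1 / (2 * π) := by positivity
    linarith
  set θs : ℝ := Real.arcosh' c with hθs
  have hθs0 : 0 < θs := arcosh_pos_aux hc1
  have hcoshs : Real.cosh θs = c := cosh_arcosh_aux hc1.le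
  -- Part 1: the derivative formula
  have hform : ∀ θ > (0 : ℝ),
      -deriv K θ = (1 / (2 * π)) * (1 / Real.sinh θ) - Real.tanh (θ / 2) := by
    intro θ hθ
    have ht : 0 < θ / 2 := by linarith
    have hch : 0 < Real.cosh (θ / 2) := Real.cosh_pos _
    have hsh : 0 < Real.sinh (θ / 2) := Real.sinh_pos_iff.2 ht
    have hsθ : 0 < Real.sinh θ := Real.sinh_pos_iff.2 hθ
    have h1 : HasDerivAt (fun x : ℝ => x / 2) (1 / 2) θ := by
      simpa using (hasDerivAt_id θ).div_const 2
    have hsinh : HasDerivAt (fun x : ℝ => Real.sinh (x / 2))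
        (Real.cosh (θ / 2) * (1 / 2)) θ := by
      have := (Real.hasDerivAt_sinh (θ / 2)).comp θ h1; exact this
    have hcosh : HasDerivAt (fun x : ℝ => Real.cosh (x / 2))
        (Real.sinh (θ / 2) * (1 / 2)) θ := by
      have := (Real.hasDerivAt_cosh (θ / 2)).comp θ h1; exact this
    have htanh : HasDerivAt (fun x : ℝ => Real.tanh (x / 2))
        ((Real.cosh (θ / 2) * (1 / 2) * Real.cosh (θ / 2)
          - Real.sinh (θ / 2) * (Real.sinh (θ / 2) * (1 / 2))) / Real.cosh (θ / 2) ^ 2) θ := by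
      have := hsinh.div hcosh hch.ne'
      have e : (fun x : ℝ => Real.tanh (x / 2)) = fun x => Real.sinh (x / 2) / Real.cosh (x / 2) := by
        funext x; rw [Real.tanh_eq_sinh_div_cosh]
      rw [e]; exact this
    have htpos : 0 < Real.tanh (θ / 2) := by
      rw [Real.tanh_eq_sinh_div_cosh]; positivity
    have hlt : HasDerivAt (fun x : ℝ => Real.log (Real.tanh (x / 2)))
        (((Real.cosh (θ / 2) * (1 / 2) * Real.cosh (θ / 2)
          - Real.sinh (θ / 2) * (Real.sinh (θ / 2) * (1 / 2))) / Real.cosh (θ / 2) ^ 2)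
          / Real.tanh (θ / 2)) θ := htanh.log htpos.ne'
    have hlc : HasDerivAt (fun x : ℝ => Real.log (Real.cosh (x / 2)))
        ((Real.sinh (θ / 2) * (1 / 2)) / Real.cosh (θ / 2)) θ := hcosh.log hch.ne'
    have hKd : HasDerivAt K
        (-(1 / (2 * π)) * (((Real.cosh (θ / 2) * (1 / 2) * Real.cosh (θ / 2)
          - Real.sinh (θ / 2) * (Real.sinh (θ / 2) * (1 / 2))) / Real.cosh (θ / 2) ^ 2)
          / Real.tanh (θ / 2))
        + 2 * ((Real.sinh (θ / 2) * (1 / 2)) / Real.cosh (θ / 2))) θ := by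
      rw [hK]
      exact (hlt.const_mul (-(1 / (2 * π)))).add (hlc.const_mul 2)
    rw [hKd.deriv]
    have hsθ2 : Real.sinh θ = 2 * Real.sinh (θ / 2) * Real.cosh (θ / 2) := by
      rw [← Real.sinh_two_mul]; ring_nf
    have hpyth : Real.cosh (θ / 2) ^ 2 - Real.sinh (θ / 2) ^ 2 = 1 :=
      Real.cosh_sq_sub_sinh_sq _
    rw [Real.tanh_eq_sinh_div_cosh, hsθ2]
    exact force_alg1 _ _ _ hsh hch hpi hpyth
  -- rewrite the force as (c - cosh θ)/sinh θ
  have hform2 : ∀ θ > (0 : ℝ), -deriv K θ = (c - Real.cosh θ) / Real.sinh θ := by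
    intro θ hθ
    have ht : 0 < θ / 2 := by linarith
    have hch : 0 < Real.cosh (θ / 2) := Real.cosh_pos _
    have hsh : 0 < Real.sinh (θ / 2) := Real.sinh_pos_iff.2 ht
    have hsθ2 : Real.sinh θ = 2 * Real.sinh (θ / 2) * Real.cosh (θ / 2) := by
      rw [← Real.sinh_two_mul]; ring_nf
    have hcθ2 : Real.cosh θ = Real.cosh (θ / 2) ^ 2 + Real.sinh (θ / 2) ^ 2 := by
      rw [← Real.cosh_two_mul]; ring_nf
    have hpyth : Real.cosh (θ / 2) ^ 2 - Real.sinh (θ / 2) ^ 2 = 1 :=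
      Real.cosh_sq_sub_sinh_sq _
    rw [hform θ hθ, Real.tanh_eq_sinh_div_cosh, hsθ2, hcθ2, hc]
    exact force_alg2 _ _ _ hsh hch hpi hpyth
  refine ⟨hform, ?_, ?_, ?_⟩
  · intro θ hθ
    have hsθ : 0 < Real.sinh θ := Real.sinh_pos_iff.2 hθ
    rw [hform2 θ hθ, div_eq_zero_iff]
    constructor
    · rintro (h | h)
      · have hcosθ : Real.cosh θ = Real.cosh θs := by rw [hcoshs]; linarith
        have := Real.cosh_lt_cosh (x := θ) (y := θs)
        have h1 : ¬ |θ| < |θs| := by rw [← Real.cosh_lt_cosh]; simp [hcosθ]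
        have h2 : ¬ |θs| < |θ| := by rw [← Real.cosh_lt_cosh]; simp [hcosθ]
        have := abs_of_pos hθ
        have := abs_of_pos hθs0
        linarith [le_of_not_gt h1, le_of_not_gt h2]
      · exact absurd h hsθ.ne'
    · rintro rfl
      left; rw [hcoshs]; ring
  · intro θ hθ hθlt
    have hsθ : 0 < Real.sinh θ := Real.sinh_pos_iff.2 hθ
    rw [hform2 θ hθ]
    apply div_pos _ hsθ
    have : Real.cosh θ < Real.cosh θs := by
      rw [Real.cosh_lt_cosh, abs_of_pos hθ, abs_of_pos hθs0]; exact hθlt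
    rw [hcoshs] at this; linarith
  · intro θ hθ
    have hθ0 : 0 < θ := hθs0.trans hθ
    have hsθ : 0 < Real.sinh θ := Real.sinh_pos_iff.2 hθ0
    rw [hform2 θ hθ0]
    apply div_neg_of_neg_of_pos _ hsθ
    have : Real.cosh θs < Real.cosh θ := by
      rw [Real.cosh_lt_cosh, abs_of_pos hθ0, abs_of_pos hθs0]; exact hθ
    rw [hcoshs] at this; linarith
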